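/- Every separable, metrizable, zero-dimensional topological space admits a compatible ultrametric (which may be taken bounded by 1). Moreover, if the space is Polish (separable and completely metrizable), it admits a compatible complete ultrametric. -/

import Mathlib

open Set TopologicalSpace Filter

/-- For each scale `(1/2)^n`, a countable clopen-partition coding function. -/
lemma exists_code_aux {X : Type*} [MetricSpace X] [SecondCountableTopology X]
    (hzero : IsTopologicalBasis {s : Set X | IsClopen s}) (n : ℕ) :
    ∃ c : X → ℕ, (∀ x : X, IsClopen {y | c y = c x}) ∧
      (∀ x y : X, c y = c x → dist x y ≤ (1/2 : ℝ) ^ n) := by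
  classical
  rcases isEmpty_or_nonempty X with hX | hX
  · exact ⟨fun _ => 0, fun x => isEmptyElim x, fun x => isEmptyElim x⟩
  have hV : ∀ x : X, ∃ s : Set X, IsClopen s ∧ x ∈ s ∧ s ⊆ Metric.ball x ((1/2 : ℝ) ^ (n+1)) := by
    intro x
    rcases hzero.exists_subset_of_mem_open (Metric.mem_ball_self (show (0:ℝ) < (1/2:ℝ)^(n+1) from pow_pos (by norm_num) _))
      Metric.isOpen_ball with ⟨s, hs, hxs, hsub⟩
    exact ⟨s, hs, hxs, hsub⟩
  choose V hVclopen hVmem hVsub using hV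
  obtain ⟨T, hTc, hTU⟩ := TopologicalSpace.isOpen_iUnion_countable V fun x => (hVclopen x).isOpen
  have hTuniv : ⋃ x ∈ T, V x = univ := by
    rw [hTU]; exact eq_univ_of_forall fun x => mem_iUnion.2 ⟨x, hVmem x⟩
  have hTne : T.Nonempty := by
    rcases hX with ⟨x⟩
    by_contra h
    rw [not_nonempty_iff_eq_empty] at h
    simp [h] at hTuniv
    exact (hTuniv ▸ mem_univ x : x ∈ (∅ : Set X))
  obtain ⟨e, he⟩ := hTc.exists_eq_range hTne
  set g : ℕ → Set X := fun k => V (e k) with hg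
  have hgclopen : ∀ k, IsClopen (g k) := fun k => hVclopen (e k)
  have hcov : ∀ x : X, ∃ k, x ∈ g k := by
    intro x
    have : x ∈ ⋃ t ∈ T, V t := hTuniv ▸ mem_univ x
    rcases mem_iUnion₂.1 this with ⟨t, htT, hxt⟩
    rw [he] at htT
    rcases htT with ⟨k, rfl⟩
    exact ⟨k, hxt⟩
  refine ⟨fun x => Nat.find (hcov x), ?_, ?_⟩
  · intro x
    have : {y | Nat.find (hcov y) = Nat.find (hcov x)} =
        g (Nat.find (hcov x)) \ ⋃ j ∈ {j | j < Nat.find (hcov x)}, g j := by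
      ext y
      simp only [mem_setOf_eq, mem_diff, mem_iUnion, exists_prop, not_exists]
      rw [Nat.find_eq_iff]
      tauto
    rw [this]
    exact (hgclopen _).diff ((Set.finite_lt_nat _).isClopen_biUnion fun j _ => hgclopen j)
  · intro x y hyx
    have hx : x ∈ g (Nat.find (hcov x)) := Nat.find_spec (hcov x)
    have hy : y ∈ g (Nat.find (hcov x)) := by
      have := Nat.find_spec (hcov y)
      simpa [hyx] using this
    have h1 := hVsub (e (Nat.find (hcov x))) hx
    have h2 := hVsub (e (Nat.find (hcov x))) hy
    rw [Metric.mem_ball] at h1 h2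
    calc dist x y ≤ dist x (e (Nat.find (hcov x))) + dist (e (Nat.find (hcov x))) y :=
          dist_triangle _ _ _
      _ ≤ (1/2 : ℝ) ^ (n+1) + (1/2 : ℝ) ^ (n+1) := by
          rw [dist_comm (e _) y]; exact add_le_add h1.le h2.le
      _ = (1/2 : ℝ) ^ n := by ring

section
variable {X : Type*} [mX : MetricSpace X] [SecondCountableTopology X]

attribute [local instance] PiNat.dist

lemma ultrametric_aux (hzero : IsTopologicalBasis {s : Set X | IsClopen s}) :
    ∃ m : MetricSpace X,
      m.toUniformSpace.toTopologicalSpace = mX.toUniformSpace.toTopologicalSpace ∧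
      (∀ x y z : X, m.toDist.dist x z ≤ max (m.toDist.dist x y) (m.toDist.dist y z)) ∧
      (∀ x y : X, m.toDist.dist x y ≤ 1) ∧
      (@CompleteSpace X mX.toUniformSpace → @CompleteSpace X m.toUniformSpace) := by
  choose c hclopen hdiam using exists_code_aux hzero
  set f : X → (ℕ → ℕ) := fun x n => c n x with hf
  set D : X → X → ℝ := fun x y => dist (f x) (f y) with hD
  -- injectivity
  have hfinj : Function.Injective f := by
    intro x y h
    by_contra hne
    obtain ⟨n, hn⟩ : ∃ n, (1/2 : ℝ) ^ n < dist x y :=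
      exists_pow_lt_of_lt_one (dist_pos.2 hne) (by norm_num)
    exact absurd (hdiam n x y (congrFun h n).symm) (by linarith)
  -- key facts about D
  have hDagree : ∀ (k : ℕ) (x y : X), D x y < (1/2 : ℝ) ^ k → ∀ i ≤ k, c i x = c i y :=
    fun k x y h i hi => PiNat.apply_eq_of_dist_lt h hi
  have hDle : ∀ (k : ℕ) (x y : X), (∀ i < k, c i y = c i x) → D y x ≤ (1/2 : ℝ) ^ k := by
    intro k x y h
    exact PiNat.mem_cylinder_iff_dist_le.1 (by exact fun i hi => h i hi)
  -- the clopen neighborhoods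
  have hW : ∀ (x : X) (k : ℕ), IsClopen {y | ∀ i < k, c i y = c i x} := by
    intro x k
    have : {y | ∀ i < k, c i y = c i x} = ⋂ i ∈ {i | i < k}, {y | c i y = c i x} := by
      ext y; simp
    rw [this]
    exact (Set.finite_lt_nat k).isClopen_biInter fun i _ => hclopen i x
  have H : ∀ s : Set X, IsOpen s ↔ ∀ x ∈ s, ∃ ε > 0, ∀ y, D x y < ε → y ∈ s := by
    intro s
    constructor
    · intro hs x hx
      obtain ⟨δ, hδ, hball⟩ := Metric.isOpen_iff.1 hs x hx
      obtain ⟨n, hn⟩ : ∃ n, (1/2 : ℝ) ^ n < δ := exists_pow_lt_of_lt_one hδ (by norm_num)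
      refine ⟨(1/2 : ℝ) ^ n, pow_pos (by norm_num) _, fun y hy => ?_⟩
      have := hdiam n x y (hDagree n x y hy n le_rfl).symm
      exact hball (by rw [Metric.mem_ball, dist_comm]; linarith)
    · intro h
      rw [isOpen_iff_mem_nhds]
      intro x hx
      obtain ⟨ε, hε, hsub⟩ := h x hx
      obtain ⟨n, hn⟩ : ∃ n, (1/2 : ℝ) ^ n < ε := exists_pow_lt_of_lt_one hε (by norm_num)
      refine Filter.mem_of_superset ((hW x n).isOpen.mem_nhds (by simp)) ?_
      intro y hy
      apply hsub
      calc D x y = D y x := PiNat.dist_comm _ _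
        _ ≤ (1/2 : ℝ) ^ n := hDle n x y hy
        _ < ε := hn
  have Dself : ∀ x : X, D x x = 0 := fun x => PiNat.dist_self _
  have Dcomm : ∀ x y : X, D x y = D y x := fun x y => PiNat.dist_comm _ _
  have Dtri : ∀ x y z : X, D x z ≤ D x y + D y z := fun x y z => PiNat.dist_triangle _ _ _
  have Deq : ∀ x y : X, D x y = 0 → x = y := fun x y h =>
    hfinj (PiNat.eq_of_dist_eq_zero _ _ h)
  refine ⟨MetricSpace.ofDistTopology D Dself Dcomm Dtri H Deq, rfl, ?_, ?_, ?_⟩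
  · exact fun x y z => PiNat.dist_triangle_nonarch (f x) (f y) (f z)
  · intro x y
    show D x y ≤ 1
    rcases eq_or_ne x y with rfl | hne
    · rw [Dself]; norm_num
    · show dist (f x) (f y) ≤ 1
      rw [PiNat.dist_eq_of_ne (fun h => hne (hfinj h))]
      exact pow_le_one₀ (by norm_num) (by norm_num)
  · intro hcomp
    refine @Metric.complete_of_convergent_controlled_sequences X
      (MetricSpace.ofDistTopology D Dself Dcomm Dtri H Deq).toPseudoMetricSpace
      (fun n => (1/2 : ℝ) ^ n) (fun n => pow_pos (by norm_num) _) ?_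
    intro u hu
    -- coordinates stabilize
    have stab : ∀ (i N n m : ℕ), i ≤ N → N ≤ n → N ≤ m → c i (u n) = c i (u m) :=
      fun i N n m hi hn hm => hDagree N (u n) (u m) (hu N n m hn hm) i hi
    -- Cauchy for the original metric
    have hcauchy : CauchySeq u := by
      rw [Metric.cauchySeq_iff]
      intro ε hε
      obtain ⟨k, hk⟩ : ∃ k, (1/2 : ℝ) ^ k < ε := exists_pow_lt_of_lt_one hε (by norm_num)
      refine ⟨k, fun m hm n hn => ?_⟩
      have : c k (u n) = c k (u m) := stab k k n m le_rfl hn hm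
      exact lt_of_le_of_lt (hdiam k (u m) (u n) this) hk
    haveI : CompleteSpace X := hcomp
    obtain ⟨x, hx⟩ := cauchySeq_tendsto_of_complete hcauchy
    exact ⟨x, hx⟩

end


/-- Every separable, metrizable, zero-dimensional topological space admits a
compatible ultrametric bounded by `1`; if moreover the space is Polish, it
admits a compatible complete ultrametric (bounded by `1`). -/
theorem exists_compatible_ultrametric
    {X : Type*} [t : TopologicalSpace X] [SeparableSpace X] [MetrizableSpace X]
    (hzero : IsTopologicalBasis {s : Set X | IsClopen s}) :
    (∃ m : MetricSpace X,
      m.toUniformSpace.toTopologicalSpace = t ∧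
      (∀ x y z : X, m.toDist.dist x z ≤ max (m.toDist.dist x y) (m.toDist.dist y z)) ∧
      (∀ x y : X, m.toDist.dist x y ≤ 1)) ∧
    (PolishSpace X →
      ∃ m : MetricSpace X,
        m.toUniformSpace.toTopologicalSpace = t ∧
        (∀ x y z : X, m.toDist.dist x z ≤ max (m.toDist.dist x y) (m.toDist.dist y z)) ∧
        (∀ x y : X, m.toDist.dist x y ≤ 1) ∧
        @CompleteSpace X m.toUniformSpace) := by
  constructor
  · letI mX : MetricSpace X := TopologicalSpace.metrizableSpaceMetric X
    haveI : SecondCountableTopology X := UniformSpace.secondCountable_of_separable X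
    obtain ⟨m, hm, h1, h2, -⟩ := ultrametric_aux hzero
    exact ⟨m, hm, h1, h2⟩
  · intro hp
    letI mX : MetricSpace X := completelyMetrizableMetric X
    haveI hcomp : @CompleteSpace X mX.toUniformSpace := complete_completelyMetrizableMetric X
    haveI : SecondCountableTopology X := UniformSpace.secondCountable_of_separable X
    obtain ⟨m, hm, h1, h2, hc⟩ := ultrametric_aux hzero
    exact ⟨m, hm, h1, h2, hc hcomp⟩
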